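/- For the Steinberg one-dimensional representation St of Ŵ^Y (linear character w ↦ (-1)^{l(w)}), assuming (Y,P) ⊆ ℤ so that l(t_y) is even for all y ∈ Y, the generalized Bethe wave function reduces to a theta series: E_St(v̂, λ̂) = e^{uκ + ξη + (λ,v)} Σ_{y∈Y} exp(κ(v,y) - ξ(λ,y) - (ξκ/2)(y,y)) for v̂ = v + uc + ξd with ξ > 0 and λ̂ = λ + ηc + κd with Re(κ) > 0, and the series converges absolutely. -/

import Mathlib

open scoped RealInnerProductSpace

/-- The lattice point y = Σᵢ mᵢ bᵢ of the full lattice Y spanned by the basis b. -/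
noncomputable def latVec {V : Type*} [NormedAddCommGroup V] [InnerProductSpace ℝ V]
    {n : ℕ} (b : Module.Basis (Fin n) ℝ V) (m : Fin n → ℤ) : V :=
  ∑ i, (m i : ℝ) • b i

/-- for the Steinberg character w ↦ (-1)^{l(w)} of Ŵ^Y, assuming
(Y,P) ⊆ ℤ (so that l(t_y) is even for all y ∈ Y), the generalized Bethe wave function
E_St(v̂,λ̂) = Σ_{y∈Y} (-1)^{l(t_y)} e^{(t_yλ̂,v̂)} converges absolutely and reduces to the
theta series e^{uκ+ξη+(λ,v)} Σ_{y∈Y} exp(κ(v,y) - ξ(λ,y) - (ξκ/2)(y,y)), where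
v̂ = v + uc + ξd with ξ > 0 and λ̂ = λ + ηc + κd with Re(κ) > 0, and
e^{(t_yλ̂,v̂)} = exp(uκ + ξη + (λ,v) + κ(v,y) - ξ(λ,y) - (ξκ/2)(y,y)).
R is a finite reduced crystallographic root system closed under its reflections, with
positive system R⁺ cut out by a generic functional, l(t_y) = Σ_{α∈R⁺}|(y,α)|, and λ is
encoded by the ℝ-linear functional Λ = (λ,·) : V → ℂ. -/

lemma refl_inner {V : Type*} [NormedAddCommGroup V] [InnerProductSpace ℝ V] {β : V}
    (hβ : ⟪β,β⟫ ≠ 0) (x : V) :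
    ⟪x - (2*⟪x,β⟫/⟪β,β⟫)•β, β⟫ = -⟪x,β⟫ := by
  rw [inner_sub_left, real_inner_smul_left]
  field_simp; ring

lemma refl_invol {V : Type*} [NormedAddCommGroup V] [InnerProductSpace ℝ V] {β : V}
    (hβ : ⟪β,β⟫ ≠ 0) (x : V) :
    (x - (2*⟪x,β⟫/⟪β,β⟫)•β) - (2*⟪x - (2*⟪x,β⟫/⟪β,β⟫)•β,β⟫/⟪β,β⟫)•β = x := by
  rw [refl_inner hβ, sub_sub, ← add_smul]
  have : 2 * ⟪x, β⟫ / ⟪β, β⟫ + 2 * -⟪x, β⟫ / ⟪β, β⟫ = 0 := by field_simp; ring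
  rw [this, zero_smul, sub_zero]

lemma refl_neg {V : Type*} [NormedAddCommGroup V] [InnerProductSpace ℝ V] (β x : V) :
    (-x) - (2*⟪-x,β⟫/⟪β,β⟫)•β = -(x - (2*⟪x,β⟫/⟪β,β⟫)•β) := by
  rw [inner_neg_left, neg_sub]
  rw [show 2 * -⟪x,β⟫ / ⟪β,β⟫ = -(2 * ⟪x,β⟫ / ⟪β,β⟫) by ring, neg_smul]
  abel

lemma sigma_pair_int {V : Type*} [NormedAddCommGroup V] [InnerProductSpace ℝ V]
    (R Rplus : Finset V)
    (hR : ∀ α : V, α ∈ R ↔ (α ∈ Rplus ∨ -α ∈ Rplus))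
    (hdisj : ∀ α ∈ Rplus, -α ∉ Rplus)
    (h0 : (0 : V) ∉ R)
    (hrefl : ∀ α ∈ R, ∀ β ∈ R, β - ((2 * ⟪β, α⟫ / ⟪α, α⟫) • α) ∈ R)
    (hred : ∀ α ∈ R, (2 : ℝ) • α ∉ R)
    (hcrys : ∀ α ∈ R, ∀ β ∈ R, ∃ z : ℤ, 2 * ⟪α, β⟫ / ⟪β, β⟫ = (z : ℝ))
    (f : V) (hf : ∀ α ∈ R, (α ∈ Rplus ↔ 0 < ⟪f, α⟫))
    (β : V) (hβ : β ∈ Rplus) :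
    ∃ k : ℤ, ⟪∑ α ∈ Rplus, α, β⟫ / ⟪β,β⟫ = (k : ℝ) := by
  classical
  have hRplusR : ∀ a ∈ Rplus, a ∈ R := fun a h => (hR a).2 (Or.inl h)
  have hβR : β ∈ R := hRplusR β hβ
  have hne0 : ∀ a ∈ R, ⟪a,a⟫ ≠ (0:ℝ) := by
    intro a ha h
    exact h0 (by rwa [inner_self_eq_zero.mp h] at ha)
  have hββ : ⟪β,β⟫ ≠ (0:ℝ) := hne0 β hβR
  set c : V → ℝ := fun a => 2*⟪a,β⟫/⟪β,β⟫ with hc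
  set s : V → V := fun a => a - (c a)•β with hs
  set zc : V → ℤ := fun a => if h : ∃ z:ℤ, c a = (z:ℝ) then h.choose else 0 with hzc
  have zc_spec : ∀ a, (∃ z:ℤ, c a = (z:ℝ)) → c a = ((zc a : ℤ) : ℝ) := by
    intro a h
    simp only [hzc, dif_pos h]
    exact h.choose_spec
  have zc_R : ∀ a ∈ R, c a = ((zc a : ℤ) : ℝ) := fun a ha => zc_spec a (hcrys a ha β hβR)
  have hs_mem : ∀ a ∈ R, s a ∈ R := fun a ha => hrefl β hβR a ha
  have hcs : ∀ a, c (s a) = - c a := by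
    intro a
    simp only [hs, hc]
    rw [refl_inner hββ]; ring
  have hcneg : ∀ x, c (-x) = - c x := by
    intro x; simp only [hc, inner_neg_left]; ring
  have hsinvol : ∀ a, s (s a) = a := fun a => refl_invol hββ a
  have hsneg : ∀ x, s (-x) = - s x := fun x => refl_neg β x
  set Φ : V → V := fun a => if s a ∈ Rplus then s a else -(s a) with hΦ
  -- Φ maps erase β to erase β
  have hΦRplus : ∀ a ∈ R, Φ a ∈ Rplus := by
    intro a ha
    by_cases h1 : s a ∈ Rplus
    · simp only [hΦ, if_pos h1]; exact h1
    · simp only [hΦ, if_neg h1]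
      rcases (hR (s a)).1 (hs_mem a ha) with h | h
      · exact absurd h h1
      · exact h
  have hΦmem : ∀ a ∈ Rplus.erase β, Φ a ∈ Rplus.erase β := by
    intro a ha
    rw [Finset.mem_erase] at ha ⊢
    obtain ⟨hane, haP⟩ := ha
    have haR := hRplusR a haP
    refine ⟨?_, hΦRplus a haR⟩
    intro hcontra
    by_cases h1 : s a ∈ Rplus
    · simp only [hΦ, if_pos h1] at hcontra
      -- s a = β, so a = s β = -β
      have : a = s β := by rw [← hcontra, hsinvol]
      have hsβ : s β = -β := by
        simp only [hs, hc]
        have : 2*⟪β,β⟫/⟪β,β⟫ = 2 := by field_simp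
        rw [this]
        rw [two_smul]; abel
      rw [hsβ] at this
      exact hdisj β hβ (this ▸ haP)
    · simp only [hΦ, if_neg h1] at hcontra
      -- -(s a) = β, so s a = -β, a = s(-β) = -s β = β
      have hsa : s a = -β := by rw [← hcontra, neg_neg]
      have : a = s (-β) := by rw [← hsa, hsinvol]
      have hsβ : s β = -β := by
        simp only [hs, hc]
        have : 2*⟪β,β⟫/⟪β,β⟫ = 2 := by field_simp
        rw [this]
        rw [two_smul]; abel
      rw [hsneg, hsβ, neg_neg] at this
      exact hane this
  have hΦinvol : ∀ a ∈ Rplus.erase β, Φ (Φ a) = a := by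
    intro a ha
    rw [Finset.mem_erase] at ha
    obtain ⟨hane, haP⟩ := ha
    by_cases h1 : s a ∈ Rplus
    · simp only [hΦ, if_pos h1, hsinvol, if_pos haP]
    · simp only [hΦ, if_neg h1, hsneg, hsinvol]
      rw [if_neg (fun h => hdisj a haP h)]
      exact neg_neg a
  have hΦzc : ∀ a ∈ Rplus.erase β, ((zc (Φ a) : ℤ) : ZMod 2) = ((zc a : ℤ) : ZMod 2) := by
    intro a ha
    rw [Finset.mem_erase] at ha
    obtain ⟨hane, haP⟩ := ha
    have haR := hRplusR a haP
    by_cases h1 : s a ∈ Rplus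
    · have : c (Φ a) = -c a := by simp only [hΦ, if_pos h1]; exact hcs a
      have h2 : ((zc (Φ a) : ℤ) : ℝ) = -((zc a : ℤ):ℝ) := by
        rw [← zc_R _ (hRplusR _ (hΦRplus a haR)), this, zc_R a haR]
      have h3 : zc (Φ a) = -(zc a) := by exact_mod_cast h2
      rw [h3]; push_cast; exact CharTwo.neg_eq _
    · have : c (Φ a) = c a := by
        simp only [hΦ, if_neg h1]
        rw [hcneg, hcs]; ring
      have h2 : ((zc (Φ a) : ℤ) : ℝ) = ((zc a : ℤ):ℝ) := by
        rw [← zc_R _ (hRplusR _ (hΦRplus a haR)), this, zc_R a haR]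
      have h3 : zc (Φ a) = zc a := by exact_mod_cast h2
      rw [h3]
  
  have hβ0 : β ≠ 0 := fun h => h0 (h ▸ hβR)
  have hΦne : ∀ a ∈ Rplus.erase β, ((zc a : ℤ) : ZMod 2) ≠ 0 → Φ a ≠ a := by
    intro a ha hne heq
    rw [Finset.mem_erase] at ha
    obtain ⟨hane, haP⟩ := ha
    have haR := hRplusR a haP
    by_cases h1 : s a ∈ Rplus
    · simp only [hΦ, if_pos h1] at heq
      -- s a = a ⇒ c a • β = 0 ⇒ c a = 0
      have hz0 : (c a) • β = 0 := by
        have h2 : a - c a • β = a := heq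
        rw [sub_eq_self] at h2
        exact h2
      rcases smul_eq_zero.mp hz0 with h | h
      · have h2 : ((zc a:ℤ):ℝ) = 0 := by rw [← zc_R a haR]; exact h
        have h3 : zc a = 0 := by exact_mod_cast h2
        rw [h3] at hne
        simp at hne
      · exact hβ0 h
    · simp only [hΦ, if_neg h1] at heq
      have hsa : s a = -a := by rw [← neg_neg (s a), heq]
      have h : a - c a • β = -a := hsa
      have h4 : a = -a + c a • β := sub_eq_iff_eq_add.mp h
      have h2 : a + a = c a • β := by
        calc a + a = (-a + c a • β) + a := by rw [← h4]
          _ = c a • β := by abel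
      have h2' : (2:ℝ) • a = c a • β := by rw [two_smul]; exact h2
      have haβ : a = (c a / 2) • β := by
        apply smul_right_injective V (two_ne_zero (α := ℝ))
        show (2:ℝ) • a = (2:ℝ) • ((c a / 2) • β)
        rw [h2', smul_smul]
        congr 1
        ring
      set t : ℝ := c a / 2 with htdef
      have hfa : 0 < ⟪f,a⟫ := (hf a haR).1 haP
      have hfβ : 0 < ⟪f,β⟫ := (hf β hβR).1 hβ
      have hinner_fa : ⟪f,a⟫ = t * ⟪f,β⟫ := by rw [haβ, real_inner_smul_right]
      have ht : 0 < t := by nlinarith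
      have haβ2 : ⟪a,β⟫ = t * ⟪β,β⟫ := by rw [haβ, real_inner_smul_left]
      have hβa : ⟪β,a⟫ = t * ⟪β,β⟫ := by rw [real_inner_comm]; exact haβ2
      have haa : ⟪a,a⟫ = t*t*⟪β,β⟫ := by
        rw [haβ, real_inner_smul_left, real_inner_smul_right]; ring
      have hca2t : c a = 2*t := by
        simp only [hc]
        rw [haβ2]
        field_simp
      have hz : ((zc a:ℤ):ℝ) = 2*t := by rw [← zc_R a haR]; exact hca2t
      obtain ⟨z', hz'⟩ := hcrys β hβR a haR
      have hz'v : (z':ℝ) = 2/t := by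
        rw [← hz', hβa, haa]
        field_simp
      have hzz4 : ((zc a:ℤ):ℝ)*(z':ℝ) = 4 := by
        rw [hz, hz'v]
        field_simp
        ring
      have hzz4' : (zc a) * z' = 4 := by exact_mod_cast hzz4
      have hzpos : 0 < zc a := by
        have : (0:ℝ) < ((zc a:ℤ):ℝ) := by rw [hz]; linarith
        exact_mod_cast this
      have hzle : zc a ≤ 4 := Int.le_of_dvd (by norm_num) ⟨z', hzz4'.symm⟩
      have hzge : 1 ≤ zc a := hzpos
      set z : ℤ := zc a with hzdef
      clear_value z
      interval_cases z
      · -- z = 1 : t = 1/2, β = 2 • a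
        have ht2 : t = 1/2 := by push_cast at hz; linarith
        have hβ2a : (2:ℝ)•a = β := by
          rw [haβ, smul_smul, ht2]
          norm_num
        exact hred a haR (hβ2a ▸ hβR)
      · -- z = 2 : t = 1, a = β
        have ht2 : t = 1 := by push_cast at hz; linarith
        have : a = β := by rw [haβ, ht2, one_smul]
        exact hane this
      · omega
      · -- z = 4 : t = 2, a = 2 • β
        have ht2 : t = 2 := by push_cast at hz; linarith
        have : a = (2:ℝ)•β := by rw [haβ, ht2]
        exact hred β hβR (this ▸ haR)
  have hsum0 : (∑ a ∈ Rplus.erase β, ((zc a : ℤ) : ZMod 2)) = 0 :=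
    Finset.sum_involution (fun a _ => Φ a)
      (fun a ha => by rw [hΦzc a ha]; exact CharTwo.add_self_eq_zero _)
      (fun a ha h => hΦne a ha h) (fun a ha => hΦmem a ha) (fun a ha => hΦinvol a ha)
  have hsum0' : ((∑ a ∈ Rplus.erase β, zc a : ℤ) : ZMod 2) = 0 := by push_cast; exact hsum0
  have heven : Even (∑ a ∈ Rplus.erase β, zc a) := by
    rw [even_iff_two_dvd]
    exact_mod_cast (ZMod.intCast_zmod_eq_zero_iff_dvd _ 2).mp hsum0'
  have hzcβ : zc β = 2 := by
    have hcβ : c β = 2 := by simp only [hc]; field_simp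
    have h2 : ((zc β:ℤ):ℝ) = 2 := by rw [← zc_R β hβR, hcβ]
    exact_mod_cast h2
  have htotal : ∑ a ∈ Rplus, zc a = 2 + ∑ a ∈ Rplus.erase β, zc a := by
    rw [← Finset.add_sum_erase Rplus zc hβ, hzcβ]
  obtain ⟨k, hk⟩ := heven
  refine ⟨1 + k, ?_⟩
  have hsummain : 2 * ⟪∑ α ∈ Rplus, α, β⟫ / ⟪β,β⟫ = ∑ a ∈ Rplus, c a := by
    rw [sum_inner]
    simp only [hc]
    rw [← Finset.sum_div, Finset.mul_sum]
  have hsumcast : ∑ a ∈ Rplus, c a = ((∑ a ∈ Rplus, zc a : ℤ):ℝ) := by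
    push_cast
    exact Finset.sum_congr rfl (fun a ha => zc_R a (hRplusR a ha))
  have hval : 2 * ⟪∑ α ∈ Rplus, α, β⟫ / ⟪β,β⟫ = 2 * ((1:ℝ) + (k:ℝ)) := by
    rw [hsummain, hsumcast, htotal, hk]
    push_cast
    ring
  push_cast
  rw [div_eq_iff hββ] at hval ⊢
  linear_combination hval / 2


lemma summable_exp_neg_sum_abs (n : ℕ) :
    Summable (fun m : Fin n → ℤ => Real.exp (-∑ i, |((m i : ℤ) : ℝ)|)) := by
  induction n with
  | zero =>
    haveI : Finite (Fin 0 → ℤ) := by infer_instance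
    exact Summable.of_finite
  | succ n ih =>
    have h1 : Summable (fun k : ℤ => Real.exp (-|((k : ℤ) : ℝ)|)) := by
      apply Summable.of_nat_of_neg
      · apply Real.summable_exp_neg_nat.congr
        intro k
        congr 1
        simp
      · apply Real.summable_exp_neg_nat.congr
        intro k
        congr 1
        simp
    have h2 := h1.mul_of_nonneg ih (fun k => Real.exp_nonneg _) (fun m => Real.exp_nonneg _)
    set e := Fin.consEquiv (fun _ : Fin (n+1) => ℤ) with he
    apply (Equiv.summable_iff e).mp
    apply h2.congr
    rintro ⟨k, m⟩
    show Real.exp (-|((k:ℤ):ℝ)|) * Real.exp (-∑ i, |((m i : ℤ):ℝ)|)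
      = Real.exp (-∑ i : Fin (n+1), |(((Fin.cons k m : Fin (n+1) → ℤ) i : ℤ) : ℝ)|)
    rw [← Real.exp_add, Fin.sum_univ_succ]
    simp [neg_add]
    ring

lemma latlen_even {V : Type*} [NormedAddCommGroup V] [InnerProductSpace ℝ V]
    {n : ℕ} (b : Module.Basis (Fin n) ℝ V)
    (R Rplus : Finset V)
    (hR : ∀ α : V, α ∈ R ↔ (α ∈ Rplus ∨ -α ∈ Rplus))
    (hdisj : ∀ α ∈ Rplus, -α ∉ Rplus)
    (h0 : (0 : V) ∉ R)
    (hrefl : ∀ α ∈ R, ∀ β ∈ R, β - ((2 * ⟪β, α⟫ / ⟪α, α⟫) • α) ∈ R)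
    (hred : ∀ α ∈ R, (2 : ℝ) • α ∉ R)
    (hcrys : ∀ α ∈ R, ∀ β ∈ R, ∃ z : ℤ, 2 * ⟪α, β⟫ / ⟪β, β⟫ = (z : ℝ))
    (f : V) (hf : ∀ α ∈ R, (α ∈ Rplus ↔ 0 < ⟪f, α⟫))
    (l : (Fin n → ℤ) → ℕ)
    (hl : ∀ m : Fin n → ℤ, (l m : ℝ) = ∑ α ∈ Rplus, |⟪latVec b m, α⟫|)
    (hP : ∀ m : Fin n → ℤ, ∀ p : V,
      (∀ α ∈ R, ∃ z : ℤ, 2 * ⟪p, α⟫ / ⟪α, α⟫ = (z : ℝ)) →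
      ∃ z : ℤ, ⟪latVec b m, p⟫ = (z : ℝ))
    (m : Fin n → ℤ) : Even (l m) := by
  classical
  have hRplusR : ∀ a ∈ Rplus, a ∈ R := fun a h => (hR a).2 (Or.inl h)
  have hne0 : ∀ a ∈ R, ⟪a,a⟫ ≠ (0:ℝ) := by
    intro a ha h
    exact h0 (by rwa [inner_self_eq_zero.mp h] at ha)
  set σ : V := ∑ α ∈ Rplus, α with hσ
  have hp : ∀ β' ∈ R, ∃ z:ℤ, 2*⟪(2⁻¹:ℝ)•σ, β'⟫/⟪β',β'⟫ = (z:ℝ) := by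
    intro β' hβ'
    have hB := hne0 β' hβ'
    rcases (hR β').1 hβ' with h | h
    · obtain ⟨k, hk⟩ := sigma_pair_int R Rplus hR hdisj h0 hrefl hred hcrys f hf β' h
      refine ⟨k, ?_⟩
      rw [real_inner_smul_left]
      rw [div_eq_iff hB] at hk ⊢
      rw [← hσ] at hk
      linear_combination hk
    · obtain ⟨k, hk⟩ := sigma_pair_int R Rplus hR hdisj h0 hrefl hred hcrys f hf (-β') h
      refine ⟨-k, ?_⟩
      rw [inner_neg_right, inner_neg_neg] at hk
      rw [real_inner_smul_left]
      rw [div_eq_iff hB] at hk ⊢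
      rw [← hσ] at hk
      push_cast
      linear_combination -hk
  obtain ⟨z, hz⟩ := hP m _ hp
  have hyσ : ⟪latVec b m, σ⟫ = 2*(z:ℝ) := by
    rw [real_inner_smul_right] at hz
    linarith
  set wc : V → ℤ := fun α => if h : ∃ z:ℤ, ⟪latVec b m, α⟫ = (z:ℝ) then h.choose else 0 with hwc
  have wc_spec : ∀ α ∈ R, ⟪latVec b m, α⟫ = ((wc α : ℤ) : ℝ) := by
    intro α hα
    have hex := hP m α (fun β' hβ' => hcrys α hα β' hβ')
    simp only [hwc, dif_pos hex]
    exact hex.choose_spec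
  have hsumw : ∑ α ∈ Rplus, wc α = 2*z := by
    have h1 : ((∑ α ∈ Rplus, wc α : ℤ):ℝ) = ⟪latVec b m, σ⟫ := by
      push_cast
      rw [hσ, inner_sum]
      exact (Finset.sum_congr rfl fun α hα => (wc_spec α (hRplusR α hα)).symm)
    rw [hyσ] at h1
    exact_mod_cast h1
  have hlint : (l m : ℤ) = ∑ α ∈ Rplus, |wc α| := by
    have habs : (l m : ℝ) = ((∑ α ∈ Rplus, |wc α| : ℤ):ℝ) := by
      rw [hl m]
      push_cast
      exact Finset.sum_congr rfl fun α hα => by rw [wc_spec α (hRplusR α hα)]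
    exact_mod_cast habs
  have heven : Even (∑ α ∈ Rplus, |wc α|) := by
    have h1 : Even (∑ α ∈ Rplus, (|wc α| - wc α)) := by
      apply Finset.even_sum
      intro α hα
      rcases abs_choice (wc α) with h | h
      · rw [h]; simp
      · rw [h]; exact ⟨-wc α, by ring⟩
    have h2 : Even (∑ α ∈ Rplus, wc α) := ⟨z, by rw [hsumw]; ring⟩
    have h3 : ∑ α ∈ Rplus, |wc α|
        = (∑ α ∈ Rplus, (|wc α| - wc α)) + ∑ α ∈ Rplus, wc α := by
      rw [← Finset.sum_add_distrib]
      exact Finset.sum_congr rfl fun α _ => by ring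
    rw [h3]
    exact h1.add h2
  have : Even ((l m : ℤ)) := hlint ▸ heven
  exact_mod_cast this

theorem stmt19 {V : Type*} [NormedAddCommGroup V] [InnerProductSpace ℝ V]
    {n : ℕ} (b : Module.Basis (Fin n) ℝ V)
    (R Rplus : Finset V)
    (hR : ∀ α : V, α ∈ R ↔ (α ∈ Rplus ∨ -α ∈ Rplus))
    (hdisj : ∀ α ∈ Rplus, -α ∉ Rplus)
    (h0 : (0 : V) ∉ R)
    (hrefl : ∀ α ∈ R, ∀ β ∈ R, β - ((2 * ⟪β, α⟫ / ⟪α, α⟫) • α) ∈ R)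
    (hred : ∀ α ∈ R, (2 : ℝ) • α ∉ R)
    (hcrys : ∀ α ∈ R, ∀ β ∈ R, ∃ z : ℤ, 2 * ⟪α, β⟫ / ⟪β, β⟫ = (z : ℝ))
    (f : V) (hf : ∀ α ∈ R, (α ∈ Rplus ↔ 0 < ⟪f, α⟫))
    -- the length function l(t_y):
    (l : (Fin n → ℤ) → ℕ)
    (hl : ∀ m : Fin n → ℤ, (l m : ℝ) = ∑ α ∈ Rplus, |⟪latVec b m, α⟫|)
    -- (Y, P) ⊆ ℤ: every lattice point pairs integrally with every weight:
    (hP : ∀ m : Fin n → ℤ, ∀ p : V,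
      (∀ α ∈ R, ∃ z : ℤ, 2 * ⟪p, α⟫ / ⟪α, α⟫ = (z : ℝ)) →
      ∃ z : ℤ, ⟪latVec b m, p⟫ = (z : ℝ))
    (Λ : V →ₗ[ℝ] ℂ)
    (v : V) (u ξ : ℝ) (hξ : 0 < ξ) (η κ : ℂ) (hκ : 0 < κ.re) :
    Summable (fun m : Fin n → ℤ =>
      ‖((-1 : ℂ) ^ (l m)) * Complex.exp ((u : ℂ) * κ + (ξ : ℂ) * η + Λ v
          + κ * ((⟪v, latVec b m⟫ : ℝ) : ℂ) - (ξ : ℂ) * Λ (latVec b m)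
          - ((ξ : ℂ) * κ / 2) * ((⟪latVec b m, latVec b m⟫ : ℝ) : ℂ))‖) ∧
    (∑' m : Fin n → ℤ,
        ((-1 : ℂ) ^ (l m)) * Complex.exp ((u : ℂ) * κ + (ξ : ℂ) * η + Λ v
          + κ * ((⟪v, latVec b m⟫ : ℝ) : ℂ) - (ξ : ℂ) * Λ (latVec b m)
          - ((ξ : ℂ) * κ / 2) * ((⟪latVec b m, latVec b m⟫ : ℝ) : ℂ)))
      = Complex.exp ((u : ℂ) * κ + (ξ : ℂ) * η + Λ v)
        * ∑' m : Fin n → ℤ,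
            Complex.exp (κ * ((⟪v, latVec b m⟫ : ℝ) : ℂ) - (ξ : ℂ) * Λ (latVec b m)
              - ((ξ : ℂ) * κ / 2) * ((⟪latVec b m, latVec b m⟫ : ℝ) : ℂ)) := by
  classical
  haveI : FiniteDimensional ℝ V := Module.Finite.of_basis b
  have heven : ∀ m, Even (l m) := fun m =>
    latlen_even b R Rplus hR hdisj h0 hrefl hred hcrys f hf l hl hP m
  have hneg1 : ∀ m, ((-1:ℂ)) ^ (l m) = 1 := fun m => (heven m).neg_one_pow
  set E : (Fin n → ℤ) → ℂ := fun m => (u : ℂ) * κ + (ξ : ℂ) * η + Λ v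
      + κ * ((⟪v, latVec b m⟫ : ℝ) : ℂ) - (ξ : ℂ) * Λ (latVec b m)
      - ((ξ : ℂ) * κ / 2) * ((⟪latVec b m, latVec b m⟫ : ℝ) : ℂ) with hE
  set G : (Fin n → ℤ) → ℂ := fun m => κ * ((⟪v, latVec b m⟫ : ℝ) : ℂ)
      - (ξ : ℂ) * Λ (latVec b m)
      - ((ξ : ℂ) * κ / 2) * ((⟪latVec b m, latVec b m⟫ : ℝ) : ℂ) with hG
  set S : (Fin n → ℤ) → ℝ := fun m => ∑ i, |((m i : ℤ):ℝ)| with hS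
  have hSnn : ∀ m, 0 ≤ S m := fun m => Finset.sum_nonneg fun i _ => abs_nonneg _
  have hre : ∀ m, (E m).re = u*κ.re + ξ*η.re + (Λ v).re
      + κ.re * ⟪v, latVec b m⟫ - ξ*(Λ (latVec b m)).re
      - (ξ*κ.re/2)*⟪latVec b m, latVec b m⟫ := by
    intro m
    simp only [hE]
    have h2 : ((ξ:ℂ)*κ/2) = (((ξ/2:ℝ)):ℂ)*κ := by push_cast; ring
    rw [h2]
    simp [Complex.add_re, Complex.sub_re, Complex.mul_re]
    ring_nf
    rw [← Complex.ofReal_pow, Complex.ofReal_re, Complex.ofReal_im]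
    ring
  have hnorm : ∀ m, ‖((-1:ℂ)) ^ (l m) * Complex.exp (E m)‖ = Real.exp ((E m).re) := by
    intro m
    rw [hneg1 m, one_mul, Complex.norm_exp]
  have hsummable : Summable (fun m : Fin n → ℤ =>
      ‖((-1:ℂ)) ^ (l m) * Complex.exp (E m)‖) := by
    -- bound on the linear part in v
    obtain ⟨Cv, hxbound⟩ : ∃ Cv : ℝ, ∀ m, |⟪v, latVec b m⟫| ≤ Cv * S m := by
      refine ⟨1 + ∑ i, |⟪v, b i⟫|, fun m => ?_⟩
      have hCvb : ∀ i, |⟪v, b i⟫| ≤ 1 + ∑ j, |⟪v, b j⟫| := by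
        intro i
        have h1 : |⟪v, b i⟫| ≤ ∑ j, |⟪v, b j⟫| :=
          Finset.single_le_sum (f := fun j => |⟪v, b j⟫|) (fun j _ => abs_nonneg _)
            (Finset.mem_univ i)
        linarith
      have h1 : ⟪v, latVec b m⟫ = ∑ i, ((m i : ℤ):ℝ) * ⟪v, b i⟫ := by
        simp only [latVec, inner_sum, real_inner_smul_right]
      calc |⟪v, latVec b m⟫| ≤ ∑ i, |((m i : ℤ):ℝ) * ⟪v, b i⟫| := by
            rw [h1]; exact Finset.abs_sum_le_sum_abs _ _
        _ ≤ ∑ i, |((m i : ℤ):ℝ)| * (1 + ∑ j, |⟪v, b j⟫|) := by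
            apply Finset.sum_le_sum
            intro i _
            rw [abs_mul]
            exact mul_le_mul_of_nonneg_left (hCvb i) (abs_nonneg _)
        _ = (1 + ∑ j, |⟪v, b j⟫|) * S m := by rw [hS, ← Finset.sum_mul]; ring
    -- bound on the linear part in Λ
    obtain ⟨CL, hLbound⟩ : ∃ CL : ℝ, ∀ m, |(Λ (latVec b m)).re| ≤ CL * S m := by
      refine ⟨1 + ∑ i, ‖Λ (b i)‖, fun m => ?_⟩
      have hCLb : ∀ i, ‖Λ (b i)‖ ≤ 1 + ∑ j, ‖Λ (b j)‖ := by
        intro i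
        have h1 : ‖Λ (b i)‖ ≤ ∑ j, ‖Λ (b j)‖ :=
          Finset.single_le_sum (f := fun j => ‖Λ (b j)‖) (fun j _ => norm_nonneg _)
            (Finset.mem_univ i)
        linarith
      have h1 : (Λ (latVec b m)).re = ∑ i, ((m i : ℤ):ℝ) * (Λ (b i)).re := by
        simp only [latVec, map_sum, map_smul, Complex.re_sum, Complex.real_smul,
          Complex.mul_re, Complex.ofReal_re, Complex.ofReal_im]
        ring_nf
      calc |(Λ (latVec b m)).re| ≤ ∑ i, |((m i : ℤ):ℝ) * (Λ (b i)).re| := by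
            rw [h1]; exact Finset.abs_sum_le_sum_abs _ _
        _ ≤ ∑ i, |((m i : ℤ):ℝ)| * (1 + ∑ j, ‖Λ (b j)‖) := by
            apply Finset.sum_le_sum
            intro i _
            rw [abs_mul]
            refine mul_le_mul_of_nonneg_left ?_ (abs_nonneg _)
            refine le_trans (Complex.abs_re_le_norm _) ?_
            exact hCLb i
        _ = (1 + ∑ j, ‖Λ (b j)‖) * S m := by rw [hS, ← Finset.sum_mul]; ring
    -- norm comparison between the lattice sum and the sup norm of coefficients
    obtain ⟨K, hKpos, hSK⟩ : ∃ K : ℝ, 0 < K ∧ ∀ m, S m ≤ K * ‖latVec b m‖ := by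
      set e : V →L[ℝ] (Fin n → ℝ) :=
        LinearMap.toContinuousLinearMap (b.equivFun : V ≃ₗ[ℝ] (Fin n → ℝ)).toLinearMap with he
      refine ⟨n * ‖e‖ + 1, by positivity, fun m => ?_⟩
      have h0e : ∀ x, e x = b.equivFun x := fun x => rfl
      have heval : e (latVec b m) = fun i => ((m i : ℤ):ℝ) := by
        have h1 : latVec b m = b.equivFun.symm (fun i => ((m i : ℤ):ℝ)) := by
          rw [Module.Basis.equivFun_symm_apply]; rfl
        rw [h0e, h1]
        exact b.equivFun.apply_symm_apply _
      have h1 : ∀ i, |((m i : ℤ):ℝ)| ≤ ‖e (latVec b m)‖ := by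
        intro i
        calc |((m i : ℤ):ℝ)| = ‖(e (latVec b m)) i‖ := by rw [heval]; simp
          _ ≤ ‖e (latVec b m)‖ := norm_le_pi_norm (e (latVec b m)) i
      have hnn := norm_nonneg (latVec b m)
      have hen := norm_nonneg e
      calc S m ≤ ∑ _i : Fin n, ‖e (latVec b m)‖ := Finset.sum_le_sum (fun i _ => h1 i)
        _ = n * ‖e (latVec b m)‖ := by
            rw [Finset.sum_const, Finset.card_univ, Fintype.card_fin, nsmul_eq_mul]
        _ ≤ n * (‖e‖ * ‖latVec b m‖) :=
            mul_le_mul_of_nonneg_left (e.le_opNorm _) (Nat.cast_nonneg n)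
        _ ≤ (n * ‖e‖ + 1) * ‖latVec b m‖ := by nlinarith
    have hquad : ∀ m, (S m)^2 ≤ K^2 * ⟪latVec b m, latVec b m⟫ := by
      intro m
      rw [real_inner_self_eq_norm_sq]
      have h1 := hSK m
      nlinarith [hSnn m, norm_nonneg (latVec b m)]
    obtain ⟨c0, hc0pos, hc0le⟩ :
        ∃ c0 : ℝ, 0 < c0 ∧ ∀ m, c0 * (S m)^2 ≤ (ξ*κ.re/2) * ⟪latVec b m, latVec b m⟫ := by
      refine ⟨ξ*κ.re/(2*K^2), by positivity, fun m => ?_⟩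
      have h5 := hquad m
      have hKne : K ≠ 0 := ne_of_gt hKpos
      have h6 : (ξ*κ.re/(2*K^2)) * (K^2*⟪latVec b m, latVec b m⟫)
          = (ξ*κ.re/2) * ⟪latVec b m, latVec b m⟫ := by
        field_simp
      have h7 := mul_le_mul_of_nonneg_left h5 (le_of_lt (show (0:ℝ) < ξ*κ.re/(2*K^2) by positivity))
      calc (ξ*κ.re/(2*K^2)) * (S m)^2
          ≤ (ξ*κ.re/(2*K^2)) * (K^2*⟪latVec b m, latVec b m⟫) := h7
        _ = (ξ*κ.re/2) * ⟪latVec b m, latVec b m⟫ := h6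
    set M : ℝ := κ.re*Cv + ξ*CL with hM
    have hexp_le : ∀ m, (E m).re ≤ (u*κ.re + ξ*η.re + (Λ v).re) + M * S m - c0 * (S m)^2 := by
      intro m
      rw [hre m]
      have b1 : κ.re * ⟪v, latVec b m⟫ ≤ κ.re * (Cv * S m) :=
        mul_le_mul_of_nonneg_left (le_trans (le_abs_self _) (hxbound m)) (le_of_lt hκ)
      have b2 : -(ξ*(Λ (latVec b m)).re) ≤ ξ * (CL * S m) := by
        have h3 := hLbound m
        have h4 : -(Λ (latVec b m)).re ≤ CL * S m := by
          have := neg_abs_le ((Λ (latVec b m)).re)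
          linarith
        rw [neg_mul_eq_mul_neg]
        exact mul_le_mul_of_nonneg_left h4 (le_of_lt hξ)
      have b3 := hc0le m
      rw [hM]
      nlinarith [b1, b2, b3]
    set A : ℝ := Real.exp ((u*κ.re + ξ*η.re + (Λ v).re) + (M+1)^2/(4*c0)) with hA
    have hle : ∀ m, ‖((-1:ℂ))^(l m) * Complex.exp (E m)‖ ≤ A * Real.exp (-S m) := by
      intro m
      rw [hnorm m, hA, ← Real.exp_add]
      apply Real.exp_le_exp.mpr
      have h1 := hexp_le m
      obtain ⟨D, hQ4, hgoal⟩ : ∃ D:ℝ, (M+1)^2 = D*(4*c0) ∧ ((M+1)^2/(4*c0)) = D :=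
        ⟨(M+1)^2/(4*c0), by field_simp, rfl⟩
      rw [hgoal]
      have h2 : M * S m - c0 * (S m)^2 ≤ D + -S m := by
        nlinarith [sq_nonneg (2*c0*(S m) - (M+1)), hc0pos, hQ4]
      linarith
    exact Summable.of_nonneg_of_le (fun m => norm_nonneg _) hle
      ((summable_exp_neg_sum_abs n).mul_left A)
  refine ⟨hsummable, ?_⟩
  calc (∑' m, ((-1:ℂ)) ^ (l m) * Complex.exp (E m))
      = ∑' m, Complex.exp ((u:ℂ)*κ + (ξ:ℂ)*η + Λ v) * Complex.exp (G m) := by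
        apply tsum_congr
        intro m
        rw [hneg1 m, one_mul, ← Complex.exp_add]
        congr 1
        simp only [hE, hG]
        ring
    _ = Complex.exp ((u:ℂ)*κ + (ξ:ℂ)*η + Λ v) * ∑' m, Complex.exp (G m) := tsum_mul_left
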